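/- Let C be a model category in which the class of trivial cofibrations is closed under pullback along fibrations, let f : B → A be a fibration, and suppose the pullback functor f* : C/A → C/B has a right adjoint Π_f. Then Π_f preserves fibrations: if p : X → B is a fibration (viewed as a fibrant object of C/B), then the structure map of Π_f(p) to A is a fibration in C. -/

import Mathlib

open CategoryTheory CategoryTheory.Limits

universe v u v₂ u₂

/-- The class of morphisms having the left lifting property with respect to
every morphism in `M`. -/
def llp {C : Type u} [Category.{v} C] (M : MorphismProperty C) : MorphismProperty C :=
  fun _ _ f => ∀ ⦃X Y : C⦄ (g : X ⟶ Y), M g → HasLiftingProperty f g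

/-- The class of morphisms having the right lifting property with respect to
every morphism in `M`. -/
def rlp {C : Type u} [Category.{v} C] (M : MorphismProperty C) : MorphismProperty C :=
  fun _ _ g => ∀ ⦃A B : C⦄ (f : A ⟶ B), M f → HasLiftingProperty f g

/-- `(L, R)` is a weak factorization system: every morphism factors as a morphism
in `L` followed by one in `R`, and the two classes determine each other by the
lifting properties. -/
structure IsWFS {C : Type u} [Category.{v} C] (L R : MorphismProperty C) : Prop where
  factor : ∀ ⦃X Y : C⦄ (f : X ⟶ Y),
    ∃ (Z : C) (i : X ⟶ Z) (p : Z ⟶ Y), L i ∧ R p ∧ i ≫ p = f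
  llp_eq : L = llp R
  rlp_eq : R = rlp L

/-- A model structure on a category: classes of weak equivalences, cofibrations and
fibrations satisfying two-of-three and the two weak factorization system axioms. -/
structure ModelStructure (C : Type u) [Category.{v} C] where
  W : MorphismProperty C
  Cof : MorphismProperty C
  Fib : MorphismProperty C
  two_of_three_comp : ∀ ⦃X Y Z : C⦄ (f : X ⟶ Y) (g : Y ⟶ Z), W f → W g → W (f ≫ g)
  two_of_three_right : ∀ ⦃X Y Z : C⦄ (f : X ⟶ Y) (g : Y ⟶ Z), W f → W (f ≫ g) → W g
  two_of_three_left : ∀ ⦃X Y Z : C⦄ (f : X ⟶ Y) (g : Y ⟶ Z), W g → W (f ≫ g) → W f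
  wfs_cof_trivFib : IsWFS Cof (fun _ _ p => Fib p ∧ W p)
  wfs_trivCof_fib : IsWFS (fun _ _ i => Cof i ∧ W i) Fib

/-- Classes defined by a right lifting property are stable under base change:
if `snd` is a pullback of `g` and `g ∈ rlp M`, then `snd ∈ rlp M`. -/
lemma rlp_of_isPullback {C : Type u} [Category.{v} C] (M : MorphismProperty C)
    {P X Y Z : C} {fst : P ⟶ X} {snd : P ⟶ Y} {g : X ⟶ Z} {h : Y ⟶ Z}
    (sq : IsPullback fst snd g h) (hg : rlp M g) : rlp M snd := by
  intro E F j hj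
  constructor
  intro u v sqc
  have : HasLiftingProperty j g := hg j hj
  have sqc' : CommSq (u ≫ fst) j g (v ≫ h) := ⟨by
    rw [Category.assoc, sq.w, ← Category.assoc, sqc.w, Category.assoc]⟩
  refine ⟨⟨⟨sq.lift sqc'.lift v (by rw [sqc'.fac_right]), ?_, sq.lift_snd _ _ _⟩⟩⟩
  apply sq.hom_ext
  · rw [Category.assoc, sq.lift_fst, sqc'.fac_left]
  · rw [Category.assoc, sq.lift_snd, sqc.w]

/-- If trivial cofibrations are closed under pullback along fibrations and the
pullback functor along a fibration `f : B ⟶ A` has a right adjoint `Π_f`, then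
`Π_f` preserves fibrations: it sends a fibration `p : X ⟶ B` (a fibrant object of
`C/B`) to an object of `C/A` whose structure map is a fibration. -/
theorem pi_of_fibration_preserves_fibrations {C : Type u} [Category.{v} C]
    [HasFiniteLimits C] [HasFiniteColimits C] (M : ModelStructure C)
    (hstab : ∀ ⦃P X Y Z : C⦄ (fst : P ⟶ X) (snd : P ⟶ Y) (p : X ⟶ Z) (j : Y ⟶ Z),
      M.Fib p → M.Cof j → M.W j → IsPullback fst snd p j → M.Cof fst ∧ M.W fst)
    {B A : C} (f : B ⟶ A) (hf : M.Fib f)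
    (Pi : Over B ⥤ Over A) (adj : Over.pullback f ⊣ Pi)
    (p : Over B) (hp : M.Fib p.hom) :
    M.Fib (Pi.obj p).hom := by
  rw [M.wfs_trivCof_fib.rlp_eq]
  intro U V i hi
  constructor
  intro u v sq
  -- set up the slice objects and morphisms
  let Uo : Over A := Over.mk (i ≫ v)
  let Vo : Over A := Over.mk v
  let iA : Uo ⟶ Vo := Over.homMk i rfl
  have hu : u ≫ (Pi.obj p).hom = Uo.hom := sq.w
  let u' : Uo ⟶ Pi.obj p := Over.homMk u hu
  let q : (Over.pullback f).obj Uo ⟶ p := (adj.homEquiv Uo p).symm u'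
  -- the pullback of `f` along `v` is a fibration
  have hfst : rlp (fun _ _ i => M.Cof i ∧ M.W i) (pullback.fst Vo.hom f) := by
    have := rlp_of_isPullback (fun _ _ i => M.Cof i ∧ M.W i)
      (IsPullback.of_hasPullback Vo.hom f).flip (by rw [← M.wfs_trivCof_fib.rlp_eq]; exact hf)
    exact this
  -- the pullback of `i` along `f` is a trivial cofibration
  have hbig : IsPullback (pullback.snd Uo.hom f) (pullback.fst Uo.hom f) f Uo.hom :=
    (IsPullback.of_hasPullback Uo.hom f).flip
  have hright : IsPullback (pullback.snd Vo.hom f) (pullback.fst Vo.hom f) f Vo.hom :=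
    (IsPullback.of_hasPullback Vo.hom f).flip
  have hleft : IsPullback ((Over.pullback f).map iA).left (pullback.fst Uo.hom f)
      (pullback.fst Vo.hom f) i := by
    apply IsPullback.of_right _ _ hright
    · have h1 : ((Over.pullback f).map iA).left ≫ pullback.snd Vo.hom f =
        pullback.snd Uo.hom f := by simp [Over.pullback]; exact pullback.lift_snd _ _ _
      rw [h1]
      exact hbig
    · show ((Over.pullback f).map iA).left ≫ _ = _
      simp [Over.pullback]
      exact pullback.lift_fst _ _ _
  have htriv : M.Cof ((Over.pullback f).map iA).left ∧ M.W ((Over.pullback f).map iA).left :=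
    hstab _ _ _ _
      (by rw [M.wfs_trivCof_fib.rlp_eq]; exact hfst) hi.1 hi.2 hleft
  -- solve the transposed lifting problem against `p.hom`
  have hlift : HasLiftingProperty ((Over.pullback f).map iA).left p.hom := by
    have := M.wfs_trivCof_fib.rlp_eq ▸ hp
    exact this _ htriv
  have sqc : CommSq q.left ((Over.pullback f).map iA).left p.hom
      ((Over.pullback f).obj Vo).hom := ⟨by
    rw [Over.w q]
    exact (Over.w ((Over.pullback f).map iA)).symm⟩
  -- transpose back
  let l' : (Over.pullback f).obj Vo ⟶ p := Over.homMk sqc.lift sqc.fac_right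
  let lift' : Vo ⟶ Pi.obj p := (adj.homEquiv Vo p) l'
  have hcomp : iA ≫ lift' = u' := by
    have : (Over.pullback f).map iA ≫ l' = q := by
      ext
      exact sqc.fac_left
    rw [show iA ≫ lift' = (adj.homEquiv Uo p) ((Over.pullback f).map iA ≫ l') from
      (adj.homEquiv_naturality_left iA l').symm, this]
    simp [q]
  refine ⟨⟨⟨lift'.left, ?_, Over.w lift'⟩⟩⟩
  have := congrArg CommaMorphism.left hcomp
  exact this
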